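/- arXiv:2012.01636 — 2 statements merged into one kernel-verified Lean document; each statement's English description precedes it below -/
import Mathlib

section
/- (Chernoff bound for interleaved dependent indicator random variables.) Let T and n be positive integers, and let X_1, …, X_{nT} be {0,1}-valued random variables such that for each j ∈ {1, …, T} the n random variables X_j, X_{j+T}, …, X_{j+(n-1)T} are mutually independent. Let X^{(j)} = Σ_{i=0}^{n-1} X_{j+iT}, let μ_j = E[X^{(j)}], let X = X^{(1)} + ⋯ + X^{(T)}, and let μ = min_{1 ≤ j ≤ T} μ_j. Then for every 0 < δ < 1, Pr[X ≤ (1-δ)μT] ≤ e^{-δ²μ/2}. -/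
open MeasureTheory ProbabilityTheory

lemma aux_key_ineq {x : ℝ} (hx0 : 0 < x) (hx1 : x ≤ 1) :
    (x ^ 2 - 1) / 2 ≤ x * Real.log x := by
  rcases eq_or_lt_of_le hx1 with h | h
  · subst h; simp
  set g : ℝ → ℝ := fun y => y * Real.log y - (y ^ 2 - 1) / 2 with hg
  have hder : ∀ y ∈ Set.Ioo x 1, HasDerivAt g (Real.log y + 1 - y) y := by
    intro y hy
    have hy0 : 0 < y := lt_trans hx0 hy.1
    have h1 : HasDerivAt (fun y : ℝ => y * Real.log y) (Real.log y + 1) y :=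
      Real.hasDerivAt_mul_log hy0.ne'
    have h2 : HasDerivAt (fun y : ℝ => (y ^ 2 - 1) / 2) y y := by
      have := ((hasDerivAt_pow 2 y).sub_const 1).div_const 2
      simpa using this
    exact h1.sub h2
  have hanti : AntitoneOn g (Set.Icc x 1) := by
    have hint : interior (Set.Icc x 1) = Set.Ioo x 1 := interior_Icc
    apply antitoneOn_of_deriv_nonpos (convex_Icc x 1)
    · apply ContinuousOn.sub
      · apply ContinuousOn.mul continuousOn_id
        apply Real.continuousOn_log.mono
        intro y hy
        exact ne_of_gt (lt_of_lt_of_le hx0 hy.1)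
      · fun_prop
    · intro y hy
      rw [hint] at hy
      exact (hder y hy).differentiableAt.differentiableWithinAt
    · intro y hy
      rw [hint] at hy
      rw [(hder y hy).deriv]
      have hy0 : 0 < y := lt_trans hx0 hy.1
      have := Real.log_le_sub_one_of_pos hy0
      linarith
  have h1mem : (1 : ℝ) ∈ Set.Icc x 1 := ⟨hx1, le_rfl⟩
  have hxmem : x ∈ Set.Icc x 1 := ⟨le_rfl, hx1⟩
  have := hanti hxmem h1mem hx1
  simp only [hg, Real.log_one, mul_zero, one_pow, sub_self, zero_div, sub_zero] at this
  linarith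

lemma aux_mgf_indicator {Ω : Type*} [MeasurableSpace Ω] (P : Measure Ω) [IsProbabilityMeasure P]
    (X : Ω → ℝ) (hX : Measurable X) (h01 : ∀ ω, X ω = 0 ∨ X ω = 1) (t : ℝ) :
    mgf X P t ≤ Real.exp ((Real.exp t - 1) * ∫ ω, X ω ∂P) := by
  have hXint : Integrable X P := by
    refine Integrable.mono' (integrable_const 1) hX.aestronglyMeasurable ?_
    filter_upwards with ω
    rcases h01 ω with h | h <;> simp [h]
  have heq : mgf X P t = 1 + (Real.exp t - 1) * ∫ ω, X ω ∂P := by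
    have hpt : ∀ ω, Real.exp (t * X ω) = 1 + (Real.exp t - 1) * X ω := by
      intro ω; rcases h01 ω with h | h <;> simp [h]
    calc mgf X P t = ∫ ω, Real.exp (t * X ω) ∂P := rfl
      _ = ∫ ω, (1 + (Real.exp t - 1) * X ω) ∂P := by simp_rw [hpt]
      _ = 1 + (Real.exp t - 1) * ∫ ω, X ω ∂P := by
          rw [integral_add (integrable_const 1) (hXint.const_mul _), integral_const,
            integral_const_mul]
          simp
  rw [heq, add_comm]
  exact Real.add_one_le_exp _

theorem chernoff_interleaved_dependent {Ω : Type*} [MeasurableSpace Ω]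
    (P : Measure Ω) [IsProbabilityMeasure P]
    (T n : ℕ) (hT : 0 < T) (hn : 0 < n)
    (X : ℕ → Ω → ℝ)
    (hmeas : ∀ k ∈ Finset.Icc 1 (n * T), Measurable (X k))
    (h01 : ∀ k ∈ Finset.Icc 1 (n * T), ∀ ω, X k ω = 0 ∨ X k ω = 1)
    (hindep : ∀ j ∈ Finset.Icc 1 T,
      iIndepFun (fun i : Fin n => X (j + i * T)) P)
    (μ : ℕ → ℝ)
    (hμ : ∀ j ∈ Finset.Icc 1 T,
      μ j = ∫ ω, (∑ i ∈ Finset.range n, X (j + i * T) ω) ∂P)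
    (m : ℝ)
    (hm : m = (Finset.Icc 1 T).inf' (Finset.nonempty_Icc.mpr hT) μ)
    (δ : ℝ) (hδ0 : 0 < δ) (hδ1 : δ < 1) :
    P {ω | ∑ j ∈ Finset.Icc 1 T, ∑ i ∈ Finset.range n, X (j + i * T) ω ≤ (1 - δ) * m * T}
      ≤ ENNReal.ofReal (Real.exp (-δ ^ 2 * m / 2)) := by
  classical
  have h1δ : 0 < 1 - δ := by linarith
  set c : ℝ := -Real.log (1 - δ) with hc_def
  have hc : 0 < c := by
    have := Real.log_neg h1δ (by linarith)
    simp only [hc_def]; linarith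
  have hec : Real.exp (-c) = 1 - δ := by
    rw [hc_def, neg_neg, Real.exp_log h1δ]
  have hTR : (0:ℝ) < T := by exact_mod_cast hT
  set S : ℕ → Ω → ℝ := fun j ω => ∑ i ∈ Finset.range n, X (j + i * T) ω with hS
  have hmem : ∀ j ∈ Finset.Icc 1 T, ∀ i ∈ Finset.range n,
      j + i * T ∈ Finset.Icc 1 (n * T) := by
    intro j hj i hi
    simp only [Finset.mem_Icc] at hj ⊢
    simp only [Finset.mem_range] at hi
    refine ⟨by omega, ?_⟩
    calc j + i * T ≤ T + i * T := by omega
      _ = (i+1) * T := by ring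
      _ ≤ n * T := Nat.mul_le_mul_right _ (by omega)
  have hSmeas : ∀ j ∈ Finset.Icc 1 T, Measurable (S j) := by
    intro j hj
    exact Finset.measurable_sum _ (fun i hi => hmeas _ (hmem j hj i hi))
  have hXint : ∀ k ∈ Finset.Icc 1 (n * T), Integrable (X k) P := by
    intro k hk
    refine Integrable.mono' (integrable_const 1) (hmeas k hk).aestronglyMeasurable ?_
    filter_upwards with ω
    rcases h01 k hk ω with h | h <;> simp [h]
  have hSnn : ∀ j ∈ Finset.Icc 1 T, ∀ ω, 0 ≤ S j ω := by
    intro j hj ω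
    apply Finset.sum_nonneg
    intro i hi
    rcases h01 _ (hmem j hj i hi) ω with h | h <;> simp [h]
  set Y : Ω → ℝ := fun ω => ∑ j ∈ Finset.Icc 1 T, S j ω with hY
  have hYmeas : Measurable Y := Finset.measurable_sum _ (fun j hj => hSmeas j hj)
  set a : ℝ := (1 - δ) * m * T with ha
  set r : ℝ := c / T with hr
  have hr0 : 0 < r := div_pos hc hTR
  have hm0 : 0 ≤ m := by
    rw [hm]
    apply Finset.le_inf'
    intro j hj
    rw [hμ j hj]
    exact integral_nonneg (fun ω => hSnn j hj ω)
  -- class mgf bound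
  have hclass : ∀ j ∈ Finset.Icc 1 T,
      mgf (S j) P (-c) ≤ Real.exp ((Real.exp (-c) - 1) * μ j) := by
    intro j hj
    have hmeas' : ∀ i : Fin n, Measurable (fun ω => X (j + (i : ℕ) * T) ω) := fun i =>
      hmeas _ (hmem j hj i (Finset.mem_range.mpr i.isLt))
    have hsum_eq : S j = ∑ i : Fin n, (fun ω => X (j + (i : ℕ) * T) ω) := by
      funext ω
      rw [Finset.sum_apply]
      exact (Fin.sum_univ_eq_sum_range (fun i => X (j + i * T) ω) n).symm
    rw [hsum_eq, (hindep j hj).mgf_sum hmeas' Finset.univ]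
    calc ∏ i : Fin n, mgf (fun ω => X (j + (i : ℕ) * T) ω) P (-c)
        ≤ ∏ i : Fin n, Real.exp ((Real.exp (-c) - 1) * ∫ ω, X (j + (i : ℕ) * T) ω ∂P) := by
          refine Finset.prod_le_prod (fun i _ => mgf_nonneg) (fun i _ => ?_)
          exact aux_mgf_indicator P _ (hmeas' i)
            (fun ω => h01 _ (hmem j hj i (Finset.mem_range.mpr i.isLt)) ω) (-c)
      _ = Real.exp (∑ i : Fin n, (Real.exp (-c) - 1) * ∫ ω, X (j + (i : ℕ) * T) ω ∂P) :=
          (Real.exp_sum _ _).symm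
      _ = Real.exp ((Real.exp (-c) - 1) * μ j) := by
          congr 1
          rw [← Finset.mul_sum, hμ j hj]
          congr 1
          rw [integral_finset_sum _ (fun i hi => hXint _ (hmem j hj i hi))]
          exact Fin.sum_univ_eq_sum_range (fun i => ∫ ω, X (j + i * T) ω ∂P) n
  -- lintegral of exp(-c S j)
  have hSint : ∀ j ∈ Finset.Icc 1 T, Integrable (fun ω => Real.exp (-c * S j ω)) P := by
    intro j hj
    refine Integrable.mono' (integrable_const 1)
      (((hSmeas j hj).const_mul (-c)).exp).aestronglyMeasurable ?_
    filter_upwards with ω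
    rw [Real.norm_eq_abs, abs_of_pos (Real.exp_pos _)]
    rw [show (1:ℝ) = Real.exp 0 by simp]
    apply Real.exp_le_exp.mpr
    have := hSnn j hj ω
    nlinarith
  have hMj : ∀ j ∈ Finset.Icc 1 T,
      ∫⁻ ω, ENNReal.ofReal (Real.exp (-c * S j ω)) ∂P = ENNReal.ofReal (mgf (S j) P (-c)) := by
    intro j hj
    rw [← ofReal_integral_eq_lintegral_ofReal (hSint j hj)
      (ae_of_all _ fun ω => (Real.exp_pos _).le)]
    rfl
  -- Markov step
  have hsetm : MeasurableSet {ω | Y ω ≤ a} := measurableSet_le hYmeas measurable_const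
  have step1 : P {ω | Y ω ≤ a} ≤ ENNReal.ofReal (Real.exp (r * a)) *
      ∫⁻ ω, ENNReal.ofReal (Real.exp (-r * Y ω)) ∂P := by
    calc P {ω | Y ω ≤ a} = ∫⁻ _ in {ω | Y ω ≤ a}, 1 ∂P := (setLIntegral_one _).symm
      _ ≤ ∫⁻ ω in {ω | Y ω ≤ a}, ENNReal.ofReal (Real.exp (r * (a - Y ω))) ∂P := by
          refine setLIntegral_mono ?_ ?_
          · exact (((measurable_const.sub hYmeas).const_mul r).exp).ennreal_ofReal
          · intro ω hω
            refine ENNReal.one_le_ofReal.mpr (Real.one_le_exp ?_)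
            have : Y ω ≤ a := hω
            have := mul_nonneg hr0.le (sub_nonneg.mpr this)
            linarith
      _ ≤ ∫⁻ ω, ENNReal.ofReal (Real.exp (r * (a - Y ω))) ∂P := setLIntegral_le_lintegral _ _
      _ = ENNReal.ofReal (Real.exp (r * a)) *
          ∫⁻ ω, ENNReal.ofReal (Real.exp (-r * Y ω)) ∂P := by
          simp_rw [show ∀ ω, r * (a - Y ω) = r * a + (-r * Y ω) from fun ω => by ring,
            Real.exp_add, ENNReal.ofReal_mul (Real.exp_nonneg _)]
          rw [lintegral_const_mul _ (((hYmeas.const_mul (-r)).exp).ennreal_ofReal)]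
  -- Hölder
  have hcard : (Finset.Icc 1 T).card = T := by rw [Nat.card_Icc]; omega
  have hone : ∑ _j ∈ Finset.Icc 1 T, (T:ℝ)⁻¹ = 1 := by
    rw [Finset.sum_const, hcard, nsmul_eq_mul]
    field_simp
  have hexp_rpow : ∀ (x y : ℝ), Real.exp x ^ y = Real.exp (x * y) := by
    intro x y
    rw [Real.rpow_def_of_pos (Real.exp_pos _), Real.log_exp]
  have hpointwise : ∀ ω, ENNReal.ofReal (Real.exp (-r * Y ω)) =
      ∏ j ∈ Finset.Icc 1 T, (ENNReal.ofReal (Real.exp (-c * S j ω))) ^ (T:ℝ)⁻¹ := by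
    intro ω
    have h1 : ∀ j ∈ Finset.Icc 1 T,
        (ENNReal.ofReal (Real.exp (-c * S j ω))) ^ (T:ℝ)⁻¹ =
        ENNReal.ofReal (Real.exp (-c * S j ω * (T:ℝ)⁻¹)) := by
      intro j hj
      rw [ENNReal.ofReal_rpow_of_pos (Real.exp_pos _), hexp_rpow]
    rw [Finset.prod_congr rfl h1, ← ENNReal.ofReal_prod_of_nonneg
      (fun j hj => (Real.exp_nonneg _)), ← Real.exp_sum]
    have hsum : ∑ j ∈ Finset.Icc 1 T, -c * S j ω * (T:ℝ)⁻¹ = -r * Y ω := by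
      rw [Finset.sum_congr rfl
        (fun j (_ : j ∈ Finset.Icc 1 T) =>
          (by ring : -c * S j ω * (T:ℝ)⁻¹ = (-c * (T:ℝ)⁻¹) * S j ω)),
        ← Finset.mul_sum]
      have hcr : -c * (T:ℝ)⁻¹ = -r := by rw [hr]; field_simp
      rw [hcr]
    rw [hsum]
  have holder : ∫⁻ ω, ENNReal.ofReal (Real.exp (-r * Y ω)) ∂P ≤
      ∏ j ∈ Finset.Icc 1 T, (∫⁻ ω, ENNReal.ofReal (Real.exp (-c * S j ω)) ∂P) ^ (T:ℝ)⁻¹ := by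
    simp_rw [hpointwise]
    exact ENNReal.lintegral_prod_norm_pow_le _
      (fun j hj => (((hSmeas j hj).const_mul (-c)).exp).ennreal_ofReal.aemeasurable)
      hone (fun j _ => by positivity)
  -- bound each Hölder factor
  have hterm : ∀ j ∈ Finset.Icc 1 T,
      (∫⁻ ω, ENNReal.ofReal (Real.exp (-c * S j ω)) ∂P) ^ (T:ℝ)⁻¹ ≤
      ENNReal.ofReal (Real.exp ((Real.exp (-c) - 1) * m * (T:ℝ)⁻¹)) := by
    intro j hj
    rw [hMj j hj]
    have hμm : m ≤ μ j := by rw [hm]; exact Finset.inf'_le _ hj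
    have h1 : mgf (S j) P (-c) ≤ Real.exp ((Real.exp (-c) - 1) * m) := by
      refine (hclass j hj).trans (Real.exp_le_exp.mpr ?_)
      apply mul_le_mul_of_nonpos_left hμm
      rw [hec]; linarith
    calc (ENNReal.ofReal (mgf (S j) P (-c))) ^ (T:ℝ)⁻¹
        ≤ (ENNReal.ofReal (Real.exp ((Real.exp (-c) - 1) * m))) ^ (T:ℝ)⁻¹ :=
          ENNReal.rpow_le_rpow (ENNReal.ofReal_le_ofReal h1) (by positivity)
      _ = ENNReal.ofReal (Real.exp ((Real.exp (-c) - 1) * m * (T:ℝ)⁻¹)) := by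
          rw [ENNReal.ofReal_rpow_of_pos (Real.exp_pos _), hexp_rpow]
  have hprodbound : ∏ j ∈ Finset.Icc 1 T,
      (∫⁻ ω, ENNReal.ofReal (Real.exp (-c * S j ω)) ∂P) ^ (T:ℝ)⁻¹ ≤
      ENNReal.ofReal (Real.exp ((Real.exp (-c) - 1) * m)) := by
    calc ∏ j ∈ Finset.Icc 1 T, (∫⁻ ω, ENNReal.ofReal (Real.exp (-c * S j ω)) ∂P) ^ (T:ℝ)⁻¹
        ≤ ∏ _j ∈ Finset.Icc 1 T,
            ENNReal.ofReal (Real.exp ((Real.exp (-c) - 1) * m * (T:ℝ)⁻¹)) :=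
          Finset.prod_le_prod' hterm
      _ = (ENNReal.ofReal (Real.exp ((Real.exp (-c) - 1) * m * (T:ℝ)⁻¹))) ^ T := by
          rw [Finset.prod_const, hcard]
      _ = ENNReal.ofReal (Real.exp ((Real.exp (-c) - 1) * m)) := by
          rw [← ENNReal.ofReal_pow (Real.exp_nonneg _), ← Real.exp_nat_mul]
          congr 1
          field_simp
  -- combine
  have hsetEq : {ω | ∑ j ∈ Finset.Icc 1 T, ∑ i ∈ Finset.range n, X (j + i * T) ω
      ≤ (1 - δ) * m * T} = {ω | Y ω ≤ a} := rfl
  rw [hsetEq]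
  calc P {ω | Y ω ≤ a}
      ≤ ENNReal.ofReal (Real.exp (r * a)) *
        ∫⁻ ω, ENNReal.ofReal (Real.exp (-r * Y ω)) ∂P := step1
    _ ≤ ENNReal.ofReal (Real.exp (r * a)) *
        ENNReal.ofReal (Real.exp ((Real.exp (-c) - 1) * m)) :=
        mul_le_mul_right (holder.trans hprodbound) _
    _ = ENNReal.ofReal (Real.exp (r * a + (Real.exp (-c) - 1) * m)) := by
        rw [← ENNReal.ofReal_mul (Real.exp_nonneg _), ← Real.exp_add]
    _ ≤ ENNReal.ofReal (Real.exp (-δ ^ 2 * m / 2)) := by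
        apply ENNReal.ofReal_le_ofReal
        apply Real.exp_le_exp.mpr
        have hra : r * a = c * ((1 - δ) * m) := by
          rw [hr, ha]; field_simp
        rw [hra, hec, hc_def]
        have hkey := aux_key_ineq h1δ (by linarith : (1:ℝ) - δ ≤ 1)
        nlinarith [mul_le_mul_of_nonneg_left hkey hm0]
end

section
/- (Concentration of the number of unique blocks, discrete form of Lemma 6.) Let μ > 0 and Δ > 0, set η = e^{-2μΔ}, let n be a positive even integer, and let X_1, …, X_{n+1} be i.i.d. exponential random variables with rate μ. For 1 ≤ i ≤ n define the indicator Y_i = 1 if X_i ≥ 2Δ and X_{i+1} ≥ 2Δ, and Y_i = 0 otherwise, and let Y = Σ_{i=1}^n Y_i. Then for every 0 < δ < 1, Pr[Y ≤ (1-δ)η²n] ≤ e^{-δ²η²n/4}. -/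
open MeasureTheory ProbabilityTheory
open scoped ENNReal NNReal

section Helpers

open Real Set in
lemma expMeasure_Ici' {r c : ℝ} (hr : 0 < r) (hc : 0 ≤ c) :
    expMeasure r (Set.Ici c) = ENNReal.ofReal (Real.exp (-(r * c))) := by
  have hwd : expMeasure r = volume.withDensity (exponentialPDF r) := rfl
  have hIic : expMeasure r (Set.Iic c) = ENNReal.ofReal (1 - Real.exp (-(r * c))) := by
    rw [hwd, withDensity_apply _ measurableSet_Iic,
      lintegral_exponentialPDF_eq_antiDeriv hr c, if_pos hc]
  have hsing : expMeasure r {c} = 0 := by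
    rw [hwd, withDensity_apply _ (measurableSet_singleton c)]
    simp [Measure.restrict_singleton]
  have hIio : expMeasure r (Set.Iio c) = ENNReal.ofReal (1 - Real.exp (-(r * c))) := by
    rw [← hIic]
    exact measure_congr (MeasureTheory.Iio_ae_eq_Iic' hsing)
  have : IsProbabilityMeasure (expMeasure r) := isProbabilityMeasure_expMeasure hr
  have hcompl : Set.Ici c = (Set.Iio c)ᶜ := by simp
  rw [hcompl, measure_compl measurableSet_Iio (measure_ne_top _ _), hIio, measure_univ]
  rw [← ENNReal.ofReal_one, ← ENNReal.ofReal_sub _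
    (by simpa using Real.exp_le_one_iff.2 (by nlinarith : -(r * c) ≤ 0) :
      (0:ℝ) ≤ 1 - Real.exp (-(r * c)))]
  congr 1; ring

open Real Set in
lemma key_ineq' {x : ℝ} (h0 : 0 ≤ x) (h1 : x < 1) :
    x ^ 2 / 2 ≤ x + (1 - x) * Real.log (1 - x) := by
  set φ : ℝ → ℝ := fun y => y + (1 - y) * Real.log (1 - y) - y ^ 2 / 2 with hφ
  have hder : ∀ y : ℝ, y < 1 → HasDerivAt φ (-Real.log (1 - y) - y) y := by
    intro y hy
    have h1y : (1 : ℝ) - y ≠ 0 := by linarith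
    have d1 : HasDerivAt (fun y : ℝ => 1 - y) (-1) y := by
      simpa using (hasDerivAt_id y).const_sub 1
    have d2 : HasDerivAt (fun y : ℝ => Real.log (1 - y)) (-1 / (1 - y)) y := d1.log h1y
    have d3 : HasDerivAt (fun y : ℝ => (1 - y) * Real.log (1 - y))
        ((-1) * Real.log (1 - y) + (1 - y) * (-1 / (1 - y))) y := d1.mul d2
    have d4 : HasDerivAt (fun y : ℝ => y ^ 2 / 2) y y := by
      simpa using (hasDerivAt_pow 2 y).div_const 2
    have := ((hasDerivAt_id y).add d3).sub d4
    convert this using 1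
    · rfl
    · rfl
    · rfl
    rw [show (1 - y) * (-1 / (1 - y)) = -1 by field_simp]
    ring
  have hmono : MonotoneOn φ (Icc 0 x) := by
    rcases eq_or_lt_of_le h0 with h | hx0
    · intro a ha b hb _
      have ha0 : a = 0 := le_antisymm (h ▸ ha.2) ha.1
      have hb0 : b = 0 := le_antisymm (h ▸ hb.2) hb.1
      rw [ha0, hb0]
    refine monotoneOn_of_deriv_nonneg (convex_Icc 0 x) ?_ ?_ ?_
    · intro y hy
      exact (hder y (lt_of_le_of_lt hy.2 h1)).continuousAt.continuousWithinAt
    · intro y hy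
      rw [interior_Icc] at hy
      exact (hder y (lt_trans hy.2 h1)).differentiableAt.differentiableWithinAt
    · intro y hy
      rw [interior_Icc] at hy
      rw [(hder y (lt_trans hy.2 h1)).deriv]
      have : Real.log (1 - y) ≤ (1 - y) - 1 :=
        Real.log_le_sub_one_of_pos (by linarith [hy.2] : (0:ℝ) < 1 - y)
      linarith
  have h0mem : (0:ℝ) ∈ Icc 0 x := ⟨le_refl 0, h0⟩
  have hxmem : x ∈ Icc 0 x := ⟨h0, le_refl x⟩
  have := hmono h0mem hxmem h0
  simp only [hφ] at this
  simp only [sub_zero, Real.log_one, mul_zero, add_zero] at this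
  nlinarith [this]

open Real in
lemma final_real' {δ p : ℝ} (hδ0 : 0 < δ) (hδ1 : δ < 1) (hp0 : 0 < p) (hp1 : p ≤ 1) (n : ℕ) :
    (1 - δ * p) ^ ((n : ℝ) / 2) / Real.exp (Real.log (Real.sqrt (1 - δ)) * ((1 - δ) * p * n))
      ≤ Real.exp (-δ ^ 2 * p * n / 4) := by
  have h1δ : (0:ℝ) < 1 - δ := by linarith
  have hδp : (0:ℝ) < 1 - δ * p := by nlinarith
  have key := key_ineq' hδ0.le hδ1
  have hnum : (1 - δ * p) ^ ((n : ℝ) / 2) ≤ Real.exp (-(δ * p) * ((n : ℝ) / 2)) := by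
    have hb : 1 - δ * p ≤ Real.exp (-(δ * p)) := by
      have := Real.add_one_le_exp (-(δ * p)); linarith
    calc (1 - δ * p) ^ ((n : ℝ) / 2) ≤ (Real.exp (-(δ * p))) ^ ((n : ℝ) / 2) :=
          Real.rpow_le_rpow hδp.le hb (by positivity)
      _ = Real.exp (-(δ * p) * ((n : ℝ) / 2)) := (Real.exp_mul _ _).symm
  rw [Real.log_sqrt h1δ.le]
  calc (1 - δ * p) ^ ((n : ℝ) / 2) / Real.exp (Real.log (1 - δ) / 2 * ((1 - δ) * p * n))
      ≤ Real.exp (-(δ * p) * ((n : ℝ) / 2)) / Real.exp (Real.log (1 - δ) / 2 * ((1 - δ) * p * n)) := by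
        gcongr
    _ = Real.exp (-(δ * p) * ((n : ℝ) / 2) - Real.log (1 - δ) / 2 * ((1 - δ) * p * n)) :=
        (Real.exp_sub _ _).symm
    _ ≤ Real.exp (-δ ^ 2 * p * n / 4) := by
        apply Real.exp_le_exp.2
        have hpn : (0:ℝ) ≤ p * n / 2 := by positivity
        nlinarith [mul_le_mul_of_nonneg_left key hpn]

lemma ofReal_prod' {ι : Type*} (s : Finset ι) (f : ι → ℝ) (hf : ∀ i ∈ s, 0 ≤ f i) :
    ∏ i ∈ s, ENNReal.ofReal (f i) = ENNReal.ofReal (∏ i ∈ s, f i) := by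
  classical
  induction s using Finset.induction_on with
  | empty => simp
  | insert _ _ hx ih =>
    rename_i a s
    rw [Finset.prod_insert hx, Finset.prod_insert hx,
      ih (fun i hi => hf i (Finset.mem_insert_of_mem hi)),
      ← ENNReal.ofReal_mul (hf a (Finset.mem_insert_self a s))]

end Helpers

theorem unique_blocks_concentration {Ω : Type*} [MeasurableSpace Ω]
    (P : Measure Ω) [IsProbabilityMeasure P]
    (μ Δ : ℝ) (hμ : 0 < μ) (hΔ : 0 < Δ)
    (η : ℝ) (hη : η = Real.exp (-2 * μ * Δ))
    (n : ℕ) (hn : 0 < n) (hneven : Even n)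
    (X : Fin (n + 1) → Ω → ℝ)
    (hmeas : ∀ i, Measurable (X i))
    (hlaw : ∀ i, Measure.map (X i) P = expMeasure μ)
    (hindep : iIndepFun X P)
    (Y : Fin n → Ω → ℝ)
    (hY : ∀ i ω, Y i ω = if 2 * Δ ≤ X i.castSucc ω ∧ 2 * Δ ≤ X i.succ ω then 1 else 0)
    (δ : ℝ) (hδ0 : 0 < δ) (hδ1 : δ < 1) :
    P {ω | ∑ i, Y i ω ≤ (1 - δ) * η ^ 2 * n}
      ≤ ENNReal.ofReal (Real.exp (-δ ^ 2 * η ^ 2 * n / 4)) := by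
  classical
  have hη0 : 0 < η := hη ▸ Real.exp_pos _
  have hη1 : η < 1 := hη ▸ Real.exp_lt_one_iff.2 (by nlinarith)
  set p : ℝ := η ^ 2 with hp
  have hp0 : 0 < p := by positivity
  have hp1 : p < 1 := by nlinarith
  have h1δ : (0:ℝ) < 1 - δ := by linarith
  set c : ℝ := Real.sqrt (1 - δ) with hcdef
  have hc0 : 0 < c := Real.sqrt_pos.2 h1δ
  have hcsq : c * c = 1 - δ := Real.mul_self_sqrt h1δ.le
  have hc1 : c < 1 := by nlinarith
  set L : ℝ := Real.log c with hLdef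
  have hL0 : L < 0 := Real.log_neg hc0 hc1
  set a : ℝ := (1 - δ) * p * n with hadef
  -- the events
  set A : Fin n → Set Ω :=
    fun i => {ω | 2 * Δ ≤ X i.castSucc ω ∧ 2 * Δ ≤ X i.succ ω} with hAdef
  have hAmeas : ∀ i, MeasurableSet (A i) := fun i =>
    (measurableSet_le measurable_const (hmeas _)).inter
      (measurableSet_le measurable_const (hmeas _))
  -- tail probability
  have htail : ∀ j : Fin (n + 1), P (X j ⁻¹' Set.Ici (2 * Δ)) = ENNReal.ofReal η := by
    intro j
    rw [← Measure.map_apply (hmeas j) measurableSet_Ici, hlaw j,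
      expMeasure_Ici' hμ (by positivity)]
    congr 1
    rw [hη]; congr 1; ring
  have hPA : ∀ i, P (A i) = ENNReal.ofReal p := by
    intro i
    have hne : i.castSucc ≠ i.succ := by
      simp [Fin.ext_iff]
    have hindep2 : IndepFun (X i.castSucc) (X i.succ) P := hindep.indepFun hne
    have : A i = X i.castSucc ⁻¹' Set.Ici (2 * Δ) ∩ X i.succ ⁻¹' Set.Ici (2 * Δ) := by
      ext ω; simp [hAdef, Set.mem_Ici]
    rw [this, hindep2.measure_inter_preimage_eq_mul _ _ measurableSet_Ici measurableSet_Ici,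
      htail, htail, ← ENNReal.ofReal_mul hη0.le, hp, sq]
  -- the squared factors
  set g : Fin n → Ω → ℝ≥0∞ :=
    fun i ω => if ω ∈ A i then ENNReal.ofReal (1 - δ) else 1 with hgdef
  have hgmeas : ∀ i, Measurable (g i) := fun i =>
    Measurable.ite (hAmeas i) measurable_const measurable_const
  set q : ℝ := 1 - δ * p with hqdef
  have hq0 : 0 < q := by rw [hqdef]; nlinarith
  have hgint : ∀ i, ∫⁻ ω, g i ω ∂P = ENNReal.ofReal q := by
    intro i
    have heq : ∫⁻ ω, g i ω ∂P = ∫⁻ ω, ((A i).indicator (fun _ => ENNReal.ofReal (1 - δ)) ω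
        + (A i)ᶜ.indicator (fun _ => (1:ℝ≥0∞)) ω) ∂P :=
      lintegral_congr fun ω => by
        by_cases hω : ω ∈ A i <;> simp [hgdef, hω, Set.indicator_apply]
    rw [heq, lintegral_add_left (measurable_const.indicator (hAmeas i)),
      lintegral_indicator_const (hAmeas i), lintegral_indicator_const (hAmeas i).compl,
      prob_compl_eq_one_sub (hAmeas i), hPA i, one_mul]
    rw [← ENNReal.ofReal_one, ← ENNReal.ofReal_sub _ hp0.le,
      ← ENNReal.ofReal_mul h1δ.le, ← ENNReal.ofReal_add (by nlinarith) (by nlinarith)]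
    congr 1
    rw [hqdef]; ring
  -- independence: product over a "spread-out" finset
  have hprodS : ∀ S : Finset (Fin n),
      (∀ i ∈ S, ∀ j ∈ S, i < j → (i : ℕ) + 2 ≤ (j : ℕ)) →
      ∫⁻ ω, ∏ i ∈ S, g i ω ∂P = ∏ i ∈ S, ∫⁻ ω, g i ω ∂P := by
    intro S
    induction S using Finset.induction_on_max with
    | empty => intro _; simp
    | insert b S hbS ih =>
      intro hgap
      have hbnotmem : b ∉ S := fun h => absurd (hbS b h) (lt_irrefl b)
      have hgapS : ∀ i ∈ S, ∀ j ∈ S, i < j → (i : ℕ) + 2 ≤ (j : ℕ) := fun i hi j hj hij =>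
        hgap i (Finset.mem_insert_of_mem hi) j (Finset.mem_insert_of_mem hj) hij
      have hgapb : ∀ j ∈ S, (j : ℕ) + 2 ≤ (b : ℕ) := fun j hj =>
        hgap j (Finset.mem_insert_of_mem hj) b (Finset.mem_insert_self b S) (hbS j hj)
      -- independence of g b and the product over S
      have hindepfun : IndepFun (g b) (fun ω => ∏ i ∈ S, g i ω) P := by
        set T1 : Finset (Fin (n + 1)) := {b.castSucc, b.succ} with hT1
        set T2 : Finset (Fin (n + 1)) :=
          S.image Fin.castSucc ∪ S.image Fin.succ with hT2
        have hdisj : Disjoint T1 T2 := by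
          rw [Finset.disjoint_left]
          intro x hx1 hx2
          have hx1' : (x : ℕ) = (b : ℕ) ∨ (x : ℕ) = (b : ℕ) + 1 := by
            rcases Finset.mem_insert.1 hx1 with h | h
            · left; rw [h]; simp
            · right; rw [Finset.mem_singleton.1 h]; simp
          have hx2' : ∃ j ∈ S, (x : ℕ) = (j : ℕ) ∨ (x : ℕ) = (j : ℕ) + 1 := by
            rcases Finset.mem_union.1 hx2 with h | h
            · obtain ⟨j, hj, hjx⟩ := Finset.mem_image.1 h
              exact ⟨j, hj, Or.inl (by rw [← hjx]; simp)⟩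
            · obtain ⟨j, hj, hjx⟩ := Finset.mem_image.1 h
              exact ⟨j, hj, Or.inr (by rw [← hjx]; simp)⟩
          obtain ⟨j, hj, hjx⟩ := hx2'
          have := hgapb j hj
          omega
        have base := hindep.indepFun_finset T1 T2 hdisj hmeas
        set F1 : ((j : T1) → ℝ) → ℝ≥0∞ := fun v =>
          if 2 * Δ ≤ v ⟨b.castSucc, by simp [hT1]⟩ ∧ 2 * Δ ≤ v ⟨b.succ, by simp [hT1]⟩
          then ENNReal.ofReal (1 - δ) else 1 with hF1
        have hmemc : ∀ i ∈ S, (Fin.castSucc i) ∈ T2 := fun i hi =>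
          Finset.mem_union_left _ (Finset.mem_image_of_mem _ hi)
        have hmems : ∀ i ∈ S, (Fin.succ i) ∈ T2 := fun i hi =>
          Finset.mem_union_right _ (Finset.mem_image_of_mem _ hi)
        set F2 : ((j : T2) → ℝ) → ℝ≥0∞ := fun v =>
          ∏ i ∈ S.attach,
            (if 2 * Δ ≤ v ⟨Fin.castSucc i.1, hmemc i.1 i.2⟩ ∧
                2 * Δ ≤ v ⟨Fin.succ i.1, hmems i.1 i.2⟩
             then ENNReal.ofReal (1 - δ) else 1) with hF2
        have hF1meas : Measurable F1 := by
          apply Measurable.ite _ measurable_const measurable_const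
          exact (measurableSet_le measurable_const (measurable_pi_apply _)).inter
            (measurableSet_le measurable_const (measurable_pi_apply _))
        have hF2meas : Measurable F2 := by
          apply Finset.measurable_prod
          intro i _
          apply Measurable.ite _ measurable_const measurable_const
          exact (measurableSet_le measurable_const (measurable_pi_apply _)).inter
            (measurableSet_le measurable_const (measurable_pi_apply _))
        have hcomp1 : g b = F1 ∘ (fun ω (j : T1) => X j ω) := by
          funext ω; simp [hgdef, hAdef, hF1, Function.comp]
        have hcomp2 : (fun ω => ∏ i ∈ S, g i ω) = F2 ∘ (fun ω (j : T2) => X j ω) := by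
          funext ω
          simp only [Function.comp, hF2]
          rw [← Finset.prod_attach S (fun j => g j ω)]
          apply Finset.prod_congr rfl
          intro i _
          simp [hgdef, hAdef]
        rw [hcomp1, hcomp2]
        exact base.comp hF1meas hF2meas
      calc ∫⁻ ω, ∏ i ∈ insert b S, g i ω ∂P
          = ∫⁻ ω, g b ω * ∏ i ∈ S, g i ω ∂P :=
            lintegral_congr fun ω => by rw [Finset.prod_insert hbnotmem]
        _ = (∫⁻ ω, g b ω ∂P) * ∫⁻ ω, ∏ i ∈ S, g i ω ∂P := by
            have := lintegral_mul_eq_lintegral_mul_lintegral_of_indepFun (hgmeas b)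
              (Finset.measurable_prod _ (fun i _ => hgmeas i)) hindepfun
            simpa [Pi.mul_apply] using this
        _ = (∫⁻ ω, g b ω ∂P) * ∏ i ∈ S, ∫⁻ ω, g i ω ∂P := by rw [ih hgapS]
        _ = ∏ i ∈ insert b S, ∫⁻ ω, g i ω ∂P := by rw [Finset.prod_insert hbnotmem]
  -- the square-root factors
  set h : Fin n → Ω → ℝ≥0∞ := fun i ω => if ω ∈ A i then ENNReal.ofReal c else 1 with hhdef
  have hhmeas : ∀ i, Measurable (h i) := fun i =>
    Measurable.ite (hAmeas i) measurable_const measurable_const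
  have hhsq : ∀ i ω, h i ω * h i ω = g i ω := by
    intro i ω
    by_cases hω : ω ∈ A i <;>
      simp [hhdef, hgdef, hω, ← ENNReal.ofReal_mul hc0.le, hcsq]
  -- parity split
  set Se : Finset (Fin n) := Finset.univ.filter (fun i : Fin n => (i : ℕ) % 2 = 0) with hSedef
  set So : Finset (Fin n) := Finset.univ.filter (fun i : Fin n => ¬((i : ℕ) % 2 = 0)) with hSodef
  have hgapSe : ∀ i ∈ Se, ∀ j ∈ Se, i < j → (i : ℕ) + 2 ≤ (j : ℕ) := by
    intro i hi j hj hij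
    have hi' := (Finset.mem_filter.1 hi).2
    have hj' := (Finset.mem_filter.1 hj).2
    have : (i : ℕ) < (j : ℕ) := hij
    omega
  have hgapSo : ∀ i ∈ So, ∀ j ∈ So, i < j → (i : ℕ) + 2 ≤ (j : ℕ) := by
    intro i hi j hj hij
    have hi' := (Finset.mem_filter.1 hi).2
    have hj' := (Finset.mem_filter.1 hj).2
    have : (i : ℕ) < (j : ℕ) := hij
    omega
  have hcards : Se.card + So.card = n := by
    rw [hSedef, hSodef, Finset.card_filter_add_card_filter_not]
    simp
  set x : ℝ≥0∞ := ENNReal.ofReal q with hxdef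
  have hx0 : x ≠ 0 := by simp [hxdef, hq0]
  have hxtop : x ≠ ⊤ := ENNReal.ofReal_ne_top
  have hintT : ∀ T : Finset (Fin n),
      (∀ i ∈ T, ∀ j ∈ T, i < j → (i : ℕ) + 2 ≤ (j : ℕ)) →
      ∫⁻ ω, ∏ i ∈ T, g i ω ∂P = x ^ T.card := by
    intro T hT
    rw [hprodS T hT, Finset.prod_congr rfl (fun i _ => hgint i), Finset.prod_const]
  -- the full product
  set f : Ω → ℝ≥0∞ := fun ω => ∏ i, h i ω with hfdef
  have hfmeas : Measurable f := Finset.measurable_prod _ (fun i _ => hhmeas i)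
  have hsqT : ∀ (T : Finset (Fin n)) ω, (∏ i ∈ T, h i ω) ^ (2:ℝ) = ∏ i ∈ T, g i ω := by
    intro T ω
    rw [show ((2:ℝ)) = ((2:ℕ):ℝ) by norm_num, ENNReal.rpow_natCast, sq,
      ← Finset.prod_mul_distrib]
    exact Finset.prod_congr rfl fun i _ => hhsq i ω
  -- Cauchy-Schwarz
  have hconj : Real.HolderConjugate 2 2 := ⟨by norm_num, by norm_num, by norm_num⟩
  have hCS : ∫⁻ ω, f ω ∂P ≤ x ^ ((n:ℝ)/2) := by
    have hmeasSe : AEMeasurable (fun ω => ∏ i ∈ Se, h i ω) P :=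
      (Finset.measurable_prod _ (fun i _ => hhmeas i)).aemeasurable
    have hmeasSo : AEMeasurable (fun ω => ∏ i ∈ So, h i ω) P :=
      (Finset.measurable_prod _ (fun i _ => hhmeas i)).aemeasurable
    have hholder := ENNReal.lintegral_mul_le_Lp_mul_Lq P hconj hmeasSe hmeasSo
    have hfsplit : ∫⁻ ω, f ω ∂P
        = ∫⁻ ω, ((fun ω => ∏ i ∈ Se, h i ω) * (fun ω => ∏ i ∈ So, h i ω)) ω ∂P := by
      apply lintegral_congr
      intro ω
      simp only [hfdef, Pi.mul_apply]
      exact (Finset.prod_filter_mul_prod_filter_not Finset.univ _ _).symm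
    have hSeint : ∫⁻ ω, (∏ i ∈ Se, h i ω) ^ (2:ℝ) ∂P = x ^ Se.card := by
      rw [lintegral_congr (fun ω => hsqT Se ω)]
      exact hintT Se hgapSe
    have hSoint : ∫⁻ ω, (∏ i ∈ So, h i ω) ^ (2:ℝ) ∂P = x ^ So.card := by
      rw [lintegral_congr (fun ω => hsqT So ω)]
      exact hintT So hgapSo
    calc ∫⁻ ω, f ω ∂P
        = ∫⁻ ω, ((fun ω => ∏ i ∈ Se, h i ω) * (fun ω => ∏ i ∈ So, h i ω)) ω ∂P := hfsplit
      _ ≤ (∫⁻ ω, (∏ i ∈ Se, h i ω) ^ (2:ℝ) ∂P) ^ ((1:ℝ)/2)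
          * (∫⁻ ω, (∏ i ∈ So, h i ω) ^ (2:ℝ) ∂P) ^ ((1:ℝ)/2) := hholder
      _ = (x ^ Se.card) ^ ((1:ℝ)/2) * (x ^ So.card) ^ ((1:ℝ)/2) := by
          rw [hSeint, hSoint]
      _ = x ^ ((n:ℝ)/2) := by
          rw [← ENNReal.rpow_natCast x Se.card, ← ENNReal.rpow_natCast x So.card,
            ← ENNReal.rpow_mul, ← ENNReal.rpow_mul, ← ENNReal.rpow_add _ _ hx0 hxtop]
          congr 1
          have : ((Se.card : ℝ)) + ((So.card : ℝ)) = (n : ℝ) := by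
            rw [← Nat.cast_add, hcards]
          field_simp
          linarith
  have hbound : ∫⁻ ω, f ω ∂P ≤ ENNReal.ofReal (q ^ ((n:ℝ)/2)) := by
    rw [← ENNReal.ofReal_rpow_of_pos hq0]
    exact hCS
  -- Markov / Chernoff step
  set ε : ℝ≥0∞ := ENNReal.ofReal (Real.exp (L * a)) with hεdef
  have hεpos : ε ≠ 0 := by simp [hεdef, Real.exp_pos]
  have hεtop : ε ≠ ⊤ := ENNReal.ofReal_ne_top
  have hsub : {ω | ∑ i, Y i ω ≤ a} ⊆ {ω | ε ≤ f ω} := by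
    intro ω hω
    rw [Set.mem_setOf] at hω ⊢
    have hf : f ω = ENNReal.ofReal (Real.exp (L * ∑ i, Y i ω)) := by
      have hfac : ∀ i : Fin n, h i ω = ENNReal.ofReal (Real.exp (L * Y i ω)) := by
        intro i
        by_cases hA : ω ∈ A i
        · have hY1 : Y i ω = 1 := by
            rw [hY]
            rw [if_pos]
            simpa [hAdef] using hA
          simp [hhdef, hA, hY1, hLdef, Real.exp_log hc0]
        · have hY0 : Y i ω = 0 := by
            rw [hY]
            rw [if_neg]
            simpa [hAdef] using hA
          simp [hhdef, hA, hY0]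
      rw [hfdef]
      simp only []
      rw [Finset.prod_congr rfl (fun i _ => hfac i),
        ofReal_prod' _ _ (fun i _ => (Real.exp_pos _).le), ← Real.exp_sum, ← Finset.mul_sum]
    rw [hf, hεdef]
    apply ENNReal.ofReal_le_ofReal
    apply Real.exp_le_exp.2
    exact mul_le_mul_of_nonpos_left hω hL0.le
  have hmarkov := mul_meas_ge_le_lintegral₀ (μ := P) hfmeas.aemeasurable ε
  have h1 : ε * P {ω | ∑ i, Y i ω ≤ a} ≤ ENNReal.ofReal (q ^ ((n:ℝ)/2)) :=
    le_trans (mul_le_mul_right (measure_mono hsub) ε) (le_trans hmarkov hbound)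
  have hPE : P {ω | ∑ i, Y i ω ≤ a} ≤ ε⁻¹ * ENNReal.ofReal (q ^ ((n:ℝ)/2)) := by
    calc P {ω | ∑ i, Y i ω ≤ a}
        = ε⁻¹ * (ε * P {ω | ∑ i, Y i ω ≤ a}) := by
          rw [← mul_assoc, ENNReal.inv_mul_cancel hεpos hεtop, one_mul]
      _ ≤ ε⁻¹ * ENNReal.ofReal (q ^ ((n:ℝ)/2)) := mul_le_mul_right h1 _
  have hfin : ε⁻¹ * ENNReal.ofReal (q ^ ((n:ℝ)/2))
      = ENNReal.ofReal (q ^ ((n:ℝ)/2) / Real.exp (L * a)) := by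
    rw [ENNReal.ofReal_div_of_pos (Real.exp_pos _), ENNReal.div_eq_inv_mul, hεdef]
  refine le_trans hPE ?_
  rw [hfin]
  apply ENNReal.ofReal_le_ofReal
  have := final_real' hδ0 hδ1 hp0 hp1.le n
  rw [hqdef, hLdef, hcdef, hadef]
  exact this
end
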